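/- Let n = 2m+1 be odd and let Q be the standard quadratic form Q(x) = x₁² + ⋯ + x_n² on ℂⁿ. Then the Clifford algebra of Q over ℂ is isomorphic, as a ℂ-algebra, to the direct product of two copies of the full matrix algebra of complex 2^m × 2^m matrices. -/

import Mathlib

/-!
STATEMENT 4: For n = 2m+1 odd and Q the standard sum-of-squares quadratic form
on ℂⁿ, the Clifford algebra of Q is isomorphic as a ℂ-algebra to the direct
product of two copies of the algebra of complex 2^m × 2^m matrices.
-/

namespace Pauli

variable {m : ℕ}

abbrev K (m : ℕ) := Fin m → ZMod 2

noncomputable def ε (w : ZMod 2) : ℂ := if w = 0 then 1 else -1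

lemma zmod2_cases (x : ZMod 2) : x = 0 ∨ x = 1 := by revert x; decide

lemma ε_zero : ε 0 = 1 := rfl

lemma ε_one : ε 1 = -1 := rfl

lemma ε_add (a b : ZMod 2) : ε (a + b) = ε a * ε b := by
  rcases zmod2_cases a with rfl | rfl <;> rcases zmod2_cases b with rfl | rfl
  · simp [ε_zero]
  · simp [ε_zero]
  · simp [ε_zero]
  · rw [show (1 + 1 : ZMod 2) = 0 from by decide, ε_zero, ε_one]
    norm_num

def dot (v u : K m) : ZMod 2 := ∑ i, v i * u i

lemma dot_add_right (v u u' : K m) : dot v (u + u') = dot v u + dot v u' := by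
  simp [dot, mul_add, Finset.sum_add_distrib]

lemma dot_add_left (v v' u : K m) : dot (v + v') u = dot v u + dot v' u := by
  simp [dot, add_mul, Finset.sum_add_distrib]

lemma dot_zero_right (v : K m) : dot v 0 = 0 := by simp [dot]

lemma dot_zero_left (u : K m) : dot 0 u = 0 := by simp [dot]

lemma dot_single (v : K m) (l : Fin m) : dot v (Pi.single l 1) = v l := by
  rw [dot, Finset.sum_eq_single l]
  · simp
  · intro b _ hb; simp [Pi.single_apply, hb]
  · simp

lemma self_add_self (u : K m) : u + u = 0 := by
  funext i
  show u i + u i = (0 : ZMod 2)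
  rcases zmod2_cases (u i) with h | h <;> rw [h] <;> decide

noncomputable def D (u v : K m) : Matrix (K m) (K m) ℂ :=
  Matrix.of fun a b => if b = a + u then ε (dot v b) else 0

lemma D_mul (u v u' v' : K m) :
    D u v * D u' v' = ε (dot v u') • D (u + u') (v + v') := by
  ext a c
  rw [Matrix.mul_apply, Finset.sum_eq_single (a + u) ?_ ?_]
  · have e1 : D u v a (a + u) = ε (dot v (a + u)) := by simp [D]
    have e2 : D u' v' (a + u) c = if c = a + u + u' then ε (dot v' c) else 0 := rfl
    have e3 : (ε (dot v u') • D (u + u') (v + v')) a c =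
        ε (dot v u') * (if c = a + (u + u') then ε (dot (v + v') c) else 0) := rfl
    rw [e1, e2, e3]
    by_cases h : c = a + u + u'
    · rw [if_pos h, if_pos (by rw [h, add_assoc])]
      have hau : a + u = c + u' := by
        rw [h, add_assoc (a + u) u' u', self_add_self, add_zero]
      rw [hau, dot_add_right, dot_add_left, ε_add, ε_add]
      ring
    · have h3 : ¬ c = a + (u + u') := by rwa [← add_assoc]
      rw [if_neg h, if_neg h3, mul_zero, mul_zero]
  · intro b _ hb
    have : D u v a b = 0 := by simp [D, hb]
    rw [this, zero_mul]
  · simp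

lemma D_zero_zero : (D 0 0 : Matrix (K m) (K m) ℂ) = 1 := by
  ext a b
  simp [D, Matrix.one_apply, dot_zero_left, ε_zero, eq_comm]

lemma D_sq (u v : K m) : D u v * D u v = ε (dot v u) • 1 := by
  rw [D_mul, self_add_self, self_add_self, D_zero_zero]

lemma D_anticomm {u v u' v' : K m} (h : dot v u' + dot v' u = 1) :
    D u v * D u' v' = - (D u' v' * D u v) := by
  rw [D_mul, D_mul]
  rw [show u' + u = u + u' from add_comm _ _, show v' + v = v + v' from add_comm _ _]
  rw [← neg_smul]
  congr 1
  have h2 : dot v u' = 1 + dot v' u := by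
    rcases zmod2_cases (dot v u') with h1 | h1 <;> rcases zmod2_cases (dot v' u) with h3 | h3 <;>
      rw [h1, h3] at h ⊢ <;> revert h <;> decide
  rw [h2, ε_add, ε_one]
  ring

end Pauli

namespace Pauli

variable {m : ℕ}

def dl (k : Fin m) : K m := Pi.single k 1

def cc (k : Fin m) : K m := fun j => if (j : ℕ) < (k : ℕ) then 1 else 0

def one' : K m := fun _ => 1

/-- the `u`-datum of the i-th gamma matrix -/
def uu (m : ℕ) (i : ℕ) : K m :=
  if h : i < m then dl ⟨i, h⟩
  else if h' : i < 2 * m then dl ⟨i - m, by omega⟩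
  else 0

/-- the `v`-datum of the i-th gamma matrix -/
def vv (m : ℕ) (i : ℕ) : K m :=
  if h : i < m then cc ⟨i, h⟩
  else if h' : i < 2 * m then cc ⟨i - m, by omega⟩ + dl ⟨i - m, by omega⟩
  else one'

noncomputable def σc (m : ℕ) (i : ℕ) : ℂ :=
  if i < m then 1 else if i < 2 * m then Complex.I else 1

noncomputable def g (m : ℕ) (i : ℕ) : Matrix (K m) (K m) ℂ :=
  σc m i • D (uu m i) (vv m i)

lemma dot_vv_uu (i j : ℕ) :
    dot (vv m i) (uu m j) =
      if h : j < m then vv m i ⟨j, h⟩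
      else if h' : j < 2 * m then vv m i ⟨j - m, by omega⟩
      else 0 := by
  by_cases h : j < m
  · rw [dif_pos h, uu, dif_pos h, dl, dot_single]
  · rw [dif_neg h, uu, dif_neg h]
    by_cases h' : j < 2 * m
    · rw [dif_pos h', dif_pos h', dl, dot_single]
    · rw [dif_neg h', dif_neg h', dot_zero_right]

lemma vv_apply (i l : ℕ) (hl : l < m) :
    vv m i ⟨l, hl⟩ =
      if i < m then (if l < i then 1 else 0)
      else if i < 2 * m then
        ((if l < i - m then 1 else 0) + (if l = i - m then 1 else 0))
      else 1 := by
  rw [vv]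
  by_cases h : i < m
  · rw [dif_pos h, if_pos h]; rfl
  · rw [dif_neg h, if_neg h]
    by_cases h' : i < 2 * m
    · rw [dif_pos h', if_pos h', Pi.add_apply, dl, Pi.single_apply]
      congr 1
      simp [Fin.mk.injEq]
    · rw [dif_neg h', if_neg h']; rfl

/-- anticommutation exponent is 1 for distinct indices ≤ 2m -/
lemma acc {i j : ℕ} (hij : i < j) (hj : j ≤ 2 * m) :
    dot (vv m i) (uu m j) + dot (vv m j) (uu m i) = 1 := by
  rw [dot_vv_uu, dot_vv_uu]
  by_cases hjm : j < m
  · have him : i < m := by omega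
    rw [dif_pos hjm, dif_pos him, vv_apply, vv_apply, if_pos him, if_pos hjm,
      if_neg (by omega), if_pos hij]
    decide
  · rw [dif_neg hjm]
    by_cases hj2 : j < 2 * m
    · rw [dif_pos hj2, vv_apply]
      by_cases him : i < m
      · rw [if_pos him, dif_pos him, vv_apply, if_neg hjm, if_pos hj2]
        by_cases hc : j - m < i
        · rw [if_pos hc, if_neg (by omega), if_neg (by omega)]
          decide
        · rw [if_neg hc]
          by_cases hc2 : i < j - m
          · rw [if_pos hc2, if_neg (by omega)]
            decide
          · rw [if_neg hc2, if_pos (by omega)]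
            decide
      · have him2 : i < 2 * m := by omega
        rw [if_neg him, if_pos him2, dif_neg him, dif_pos him2, vv_apply, if_neg hjm,
          if_pos hj2]
        have hlt : i - m < j - m := by omega
        rw [if_neg (by omega), if_neg (by omega), if_pos hlt, if_neg (by omega)]
        decide
    · -- j = 2m
      rw [dif_neg hj2]
      by_cases him : i < m
      · rw [dif_pos him, vv_apply, if_neg hjm, if_neg hj2]; decide
      · rw [dif_neg him, dif_pos (by omega : i < 2 * m), vv_apply, if_neg hjm, if_neg hj2]
        decide

lemma sq_exponent (i : ℕ) :
    σc m i * σc m i * ε (dot (vv m i) (uu m i)) = 1 := by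
  rw [dot_vv_uu]
  by_cases h : i < m
  · rw [dif_pos h, vv_apply, if_pos h, if_neg (by omega), σc, if_pos h, ε_zero]; ring
  · rw [dif_neg h, σc, if_neg h]
    by_cases h' : i < 2 * m
    · rw [dif_pos h', if_pos h', vv_apply, if_neg h, if_pos h',
        if_neg (by omega), if_pos rfl, zero_add, ε_one, Complex.I_mul_I]
      ring
    · rw [dif_neg h', if_neg h', ε_zero]; ring

lemma g_sq (i : ℕ) : g m i * g m i = 1 := by
  rw [g, smul_mul_assoc, mul_smul_comm, smul_smul, D_sq, smul_smul, sq_exponent, one_smul]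

lemma g_anticomm {i j : ℕ} (hij : i ≠ j) (hi : i ≤ 2 * m) (hj : j ≤ 2 * m) :
    g m i * g m j = -(g m j * g m i) := by
  have key : ∀ {a b : ℕ}, a < b → b ≤ 2 * m →
      g m a * g m b = -(g m b * g m a) := by
    intro a b hab hb2
    rw [g, g, smul_mul_assoc, mul_smul_comm, smul_mul_assoc, mul_smul_comm,
      D_anticomm (acc hab hb2)]
    rw [smul_neg, smul_neg, ← neg_smul, ← neg_smul, smul_smul, smul_smul]
    congr 1
    ring
  rcases lt_or_gt_of_ne hij with h | h
  · exact key h hj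
  · rw [key h hi]; rw [neg_neg]

end Pauli

namespace Pauli

variable {m : ℕ}

lemma ε_sum {ι : Type*} (s : Finset ι) (f : ι → ZMod 2) :
    ε (∑ i ∈ s, f i) = ∏ i ∈ s, ε (f i) := by
  induction s using Finset.cons_induction with
  | empty => simp [ε_zero]
  | cons a s ha ih => rw [Finset.sum_cons, Finset.prod_cons, ε_add, ih]

lemma neg_eq' (v : K m) : -v = v := neg_eq_of_add_eq_zero_left (self_add_self v)

lemma add_eq_zero_iff' (u v : K m) : u + v = 0 ↔ u = v := by
  rw [add_eq_zero_iff_eq_neg, neg_eq']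

lemma char_sum (w : K m) : ∑ v : K m, ε (dot v w) = if w = 0 then ((2 : ℂ) ^ m) else 0 := by
  have h1 : ∀ v : K m, ε (dot v w) = ∏ i, ε (v i * w i) := fun v => ε_sum _ _
  simp_rw [h1]
  rw [← Fintype.piFinset_univ, ← Finset.prod_univ_sum (fun _ => (Finset.univ : Finset (ZMod 2))) (fun i t => ε (t * w i))]
  have h2 : ∀ i, ∑ t : ZMod 2, ε (t * w i) = if w i = 0 then (2 : ℂ) else 0 := by
    intro i
    have hu : (Finset.univ : Finset (ZMod 2)) = {0, 1} := by decide
    rw [hu, Finset.sum_insert (by decide), Finset.sum_singleton, zero_mul, one_mul, ε_zero]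
    rcases zmod2_cases (w i) with h | h <;> rw [h] <;> norm_num [ε_zero, ε_one]
  simp_rw [h2]
  by_cases hw : w = 0
  · subst hw
    simp
  · rw [if_neg hw]
    obtain ⟨i, hi⟩ : ∃ i, w i ≠ 0 := by
      by_contra hc; push_neg at hc; exact hw (funext hc)
    exact Finset.prod_eq_zero (Finset.mem_univ i) (by rw [if_neg hi])

lemma std_mem (a b : K m) : Matrix.single a b (1 : ℂ) =
    ((2 : ℂ) ^ m)⁻¹ • ∑ v : K m, ε (dot v b) • D (a + b) v := by
  have h2m : ((2 : ℂ) ^ m) ≠ 0 := pow_ne_zero _ two_ne_zero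
  ext a' b'
  rw [Matrix.smul_apply, Matrix.sum_apply]
  have e : ∀ v : K m, (ε (dot v b) • D (a + b) v) a' b'
      = if b' = a' + (a + b) then ε (dot v b) * ε (dot v b') else 0 := by
    intro v
    by_cases h : b' = a' + (a + b)
    · rw [if_pos h]
      show ε (dot v b) * (if b' = a' + (a + b) then ε (dot v b') else 0) = _
      rw [if_pos h]
    · rw [if_neg h]
      show ε (dot v b) * (if b' = a' + (a + b) then ε (dot v b') else 0) = 0
      rw [if_neg h, mul_zero]
  simp_rw [e]
  by_cases hcond : b' = a' + (a + b)
  · simp_rw [if_pos hcond]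
    have e2 : ∀ v : K m, ε (dot v b) * ε (dot v b') = ε (dot v (b + b')) := by
      intro v
      rw [dot_add_right, ε_add]
    simp_rw [e2, char_sum]
    by_cases hb : b' = b
    · have hzero : b + b' = 0 := by rw [hb, self_add_self]
      rw [if_pos hzero, smul_eq_mul, inv_mul_cancel₀ h2m]
      have ha : a' = a := by
        have h3 : b = a' + (a + b) := hb.symm.trans hcond
        have h4 : a' + a = 0 := by
          have h5 := congrArg (· + b) h3
          simp only [add_assoc] at h5
          rw [self_add_self, add_zero] at h5
          exact h5.symm
        exact ((add_eq_zero_iff' a' a).mp h4)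
      rw [Matrix.single, Matrix.of_apply, if_pos ⟨ha.symm, hb.symm⟩]
    · have hnz : b + b' ≠ 0 := fun hc => hb ((add_eq_zero_iff' b b').mp hc).symm
      rw [if_neg hnz, smul_zero, Matrix.single, Matrix.of_apply,
        if_neg (fun hc => hb hc.2.symm)]
  · simp_rw [if_neg hcond, Finset.sum_const_zero, smul_zero]
    rw [Matrix.single, Matrix.of_apply, if_neg ?_]
    rintro ⟨rfl, rfl⟩
    exact hcond (by rw [← add_assoc, self_add_self, zero_add])

lemma D_span (M : Matrix (K m) (K m) ℂ) :
    M ∈ Submodule.span ℂ {A : Matrix (K m) (K m) ℂ | ∃ u v : K m, A = D u v} := by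
  rw [Matrix.matrix_eq_sum_single M]
  refine Submodule.sum_mem _ fun a _ => Submodule.sum_mem _ fun b _ => ?_
  have h1 : Matrix.single a b (M a b) = (M a b) • Matrix.single a b (1 : ℂ) := by
    rw [Matrix.smul_single, smul_eq_mul, mul_one]
  rw [h1, std_mem]
  exact Submodule.smul_mem _ _ (Submodule.smul_mem _ _ (Submodule.sum_mem _ fun v _ =>
    Submodule.smul_mem _ _ (Submodule.subset_span ⟨a + b, v, rfl⟩)))

end Pauli

open CliffordAlgebra

namespace CliffSpan

variable {n : ℕ} (Q : QuadraticForm ℂ (Fin n → ℂ))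

/-- basis vector -/
noncomputable def E (i : Fin n) : Fin n → ℂ := Pi.single i 1

/-- ordered product of generators over a finset -/
noncomputable def P (s : Finset (Fin n)) : CliffordAlgebra Q :=
  ((s.sort (· ≤ ·)).map fun i => ι Q (E i)).prod

lemma P_empty : P Q ∅ = 1 := by simp [P]

lemma P_insert_of_lt {i : Fin n} {s : Finset (Fin n)} (h : ∀ b ∈ s, i < b) :
    P Q (insert i s) = ι Q (E i) * P Q s := by
  have h2 : i ∉ s := fun hi => lt_irrefl i (h i hi)
  rw [P, Finset.sort_insert (· ≤ ·) (fun b hb => (h b hb).le) h2]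
  simp [P]

lemma P_singleton (i : Fin n) : P Q {i} = ι Q (E i) := by
  simp [P]

noncomputable abbrev T : Submodule ℂ (CliffordAlgebra Q) :=
  Submodule.span ℂ (Set.range (P Q))

/-- Key lemma: multiplying an ordered product by a generator stays in the span. -/
lemma L (s : Finset (Fin n)) : ∀ (j : Fin n),
    ι Q (E j) * P Q s ∈ Submodule.span ℂ (P Q '' {t | t ⊆ insert j s}) := by
  induction s using Finset.strongInduction with
  | _ s ih =>
    intro j
    rcases s.eq_empty_or_nonempty with rfl | hs
    · rw [P_empty, mul_one, ← P_singleton]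
      exact Submodule.subset_span ⟨{j}, by simp, rfl⟩
    · set i := s.min' hs with hi
      set s' := s.erase i with hs'
      have hmem : i ∈ s := s.min'_mem hs
      have hins : s = insert i s' := by
        rw [hs', Finset.insert_erase hmem]
      have hlt : ∀ b ∈ s', i < b := by
        intro b hb
        exact lt_of_le_of_ne (s.min'_le b (Finset.mem_of_mem_erase hb))
          (Ne.symm (Finset.ne_of_mem_erase hb))
      have hPs : P Q s = ι Q (E i) * P Q s' := by
        rw [hins, P_insert_of_lt Q hlt]
      have hcard : s' ⊂ s := Finset.erase_ssubset hmem
      rcases lt_trichotomy j i with hj | rfl | hj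
      · -- j < i : direct
        have : ∀ b ∈ s, j < b := fun b hb => lt_of_lt_of_le hj (s.min'_le b hb)
        rw [← P_insert_of_lt Q this]
        exact Submodule.subset_span ⟨insert j s, by simp, rfl⟩
      · -- j = i
        rw [hPs, ← mul_assoc, ι_sq_scalar, Algebra.algebraMap_eq_smul_one, smul_mul_assoc,
          one_mul]
        refine Submodule.smul_mem _ _ (Submodule.subset_span ⟨s', ?_, rfl⟩)
        exact fun x hx => Finset.mem_insert_of_mem (Finset.mem_of_mem_erase hx)
      · -- j > i
        have key : ι Q (E j) * ι Q (E i) =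
            algebraMap ℂ _ (QuadraticMap.polar Q (E j) (E i)) - ι Q (E i) * ι Q (E j) :=
          eq_sub_of_add_eq (ι_mul_ι_add_swap (E j) (E i))
        rw [hPs, ← mul_assoc, key, sub_mul, Algebra.algebraMap_eq_smul_one, smul_mul_assoc,
          one_mul, mul_assoc]
        refine sub_mem ?_ ?_
        · refine Submodule.smul_mem _ _ (Submodule.subset_span ⟨s', ?_, rfl⟩)
          intro b hb
          rw [hins]
          exact Finset.mem_insert_of_mem (Finset.mem_insert_of_mem hb)
        · -- ι (E i) * (ι (E j) * P s')
          have h1 := ih s' hcard j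
          have h2 : ι Q (E i) * (ι Q (E j) * P Q s') ∈
              Submodule.map (LinearMap.mulLeft ℂ (ι Q (E i)))
                (Submodule.span ℂ (P Q '' {t | t ⊆ insert j s'})) :=
            ⟨_, h1, rfl⟩
          rw [Submodule.map_span] at h2
          refine Submodule.span_le.mpr ?_ h2
          rintro x ⟨y, ⟨t, ht, rfl⟩, rfl⟩
          have hit : ∀ b ∈ t, i < b := by
            intro b hb
            rcases Finset.mem_insert.mp (ht hb) with rfl | hb'
            · exact hj
            · exact hlt b hb'
          simp only [LinearMap.mulLeft_apply]
          rw [← P_insert_of_lt Q hit]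
          refine Submodule.subset_span ⟨insert i t, ?_, rfl⟩
          intro b hb
          rcases Finset.mem_insert.mp hb with rfl | hb'
          · rw [hins]; exact Finset.mem_insert_of_mem (Finset.mem_insert_self _ _)
          · rcases Finset.mem_insert.mp (ht hb') with rfl | hb''
            · exact Finset.mem_insert_self _ _
            · rw [hins]
              exact Finset.mem_insert_of_mem (Finset.mem_insert_of_mem hb'')

lemma gen_mul_mem {j : Fin n} {x : CliffordAlgebra Q} (hx : x ∈ T Q) :
    ι Q (E j) * x ∈ T Q := by
  have h2 : ι Q (E j) * x ∈ Submodule.map (LinearMap.mulLeft ℂ (ι Q (E j))) (T Q) :=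
    ⟨_, hx, rfl⟩
  rw [Submodule.map_span] at h2
  refine Submodule.span_le.mpr ?_ h2
  rintro y ⟨z, ⟨s, rfl⟩, rfl⟩
  simp only [LinearMap.mulLeft_apply]
  refine Submodule.span_le.mpr ?_ (L Q s j)
  rintro w ⟨t, -, rfl⟩
  exact Submodule.subset_span ⟨t, rfl⟩

lemma mul_mem_T {x y : CliffordAlgebra Q} (hx : x ∈ T Q) (hy : y ∈ T Q) :
    x * y ∈ T Q := by
  induction hx using Submodule.span_induction with
  | mem a ha =>
    obtain ⟨s, rfl⟩ := ha
    -- induct on sorted list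
    rw [P]
    generalize (s.sort (· ≤ ·)) = l
    induction l with
    | nil => simpa using hy
    | cons i l ihl =>
      simp only [List.map_cons, List.prod_cons, mul_assoc]
      exact gen_mul_mem Q ihl
  | zero => simpa using Submodule.zero_mem _
  | add a b _ _ iha ihb => rw [add_mul]; exact Submodule.add_mem _ iha ihb
  | smul c a _ iha => rw [smul_mul_assoc]; exact Submodule.smul_mem _ _ iha

lemma T_eq_top : T Q = ⊤ := by
  rw [Submodule.eq_top_iff']
  intro x
  induction x using CliffordAlgebra.induction with
  | algebraMap r =>
    rw [Algebra.algebraMap_eq_smul_one, ← P_empty Q]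
    exact Submodule.smul_mem _ _ (Submodule.subset_span ⟨∅, rfl⟩)
  | ι v =>
    have hv : v = ∑ i, v i • E i := by
      funext j
      simp [E, Finset.sum_apply, Pi.single_apply]
    rw [hv, map_sum]
    refine Submodule.sum_mem _ fun i _ => ?_
    rw [map_smul, ← P_singleton Q]
    exact Submodule.smul_mem _ _ (Submodule.subset_span ⟨{i}, rfl⟩)
  | mul a b ha hb => exact mul_mem_T Q ha hb
  | add a b ha hb => exact Submodule.add_mem _ ha hb

instance : FiniteDimensional ℂ (CliffordAlgebra Q) := by
  classical
  exact ⟨⟨Finset.univ.image (P Q), by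
    rw [Finset.coe_image, Finset.coe_univ, Set.image_univ]
    exact T_eq_top Q⟩⟩

lemma finrank_le : Module.finrank ℂ (CliffordAlgebra Q) ≤ 2 ^ n := by
  classical
  have h := finrank_span_le_card (R := ℂ) (Set.range (P Q))
  rw [show Submodule.span ℂ (Set.range (P Q)) = ⊤ from T_eq_top Q, finrank_top] at h
  refine h.trans ?_
  have : (Set.range (P Q)).toFinset.card ≤ Fintype.card (Finset (Fin n)) := by
    rw [Set.toFinset_range]
    exact (Finset.card_image_le).trans (by simp)
  simpa [Fintype.card_finset] using this

end CliffSpan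

section SumSq

variable {A : Type*} [Ring A] [Algebra ℂ A] {ι : Type*} [Fintype ι] [DecidableEq ι]

lemma anticomm_sum_sq (a : ι → A) (h1 : ∀ i, a i * a i = 1)
    (h2 : ∀ i j, i ≠ j → a i * a j = -(a j * a i)) (x : ι → ℂ) :
    (∑ i, x i • a i) * (∑ i, x i • a i) = algebraMap ℂ A (∑ i, x i ^ 2) := by
  rw [Finset.sum_mul_sum]
  have e : ∀ i j : ι, (x i • a i) * (x j • a j) = (x i * x j) • (a i * a j) := by
    intro i j; rw [smul_mul_assoc, mul_smul_comm, smul_smul]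
  simp_rw [e]
  rw [← Finset.sum_product']
  have hsplit : (Finset.univ ×ˢ Finset.univ : Finset (ι × ι)) =
      Finset.univ.diag ∪ Finset.univ.offDiag := (Finset.diag_union_offDiag _).symm
  rw [hsplit, Finset.sum_union (Finset.disjoint_diag_offDiag _), Finset.sum_diag]
  have hoff : ∑ p ∈ Finset.univ.offDiag,
      (x p.1 * x p.2) • (a p.1 * a p.2) = 0 := by
    refine Finset.sum_involution (fun p _ => p.swap) ?_ ?_ ?_ ?_
    · intro p hp
      have hne : p.1 ≠ p.2 := (Finset.mem_offDiag.mp hp).2.2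
      simp only [Prod.fst_swap, Prod.snd_swap]
      rw [h2 p.1 p.2 hne, smul_neg, mul_comm (x p.1)]
      exact neg_add_cancel _
    · intro p hp _
      have hne : p.1 ≠ p.2 := (Finset.mem_offDiag.mp hp).2.2
      intro hsw
      apply hne
      have h := congrArg Prod.fst hsw
      simpa using h.symm
    · intro p hp
      have h := Finset.mem_offDiag.mp hp
      exact Finset.mem_offDiag.mpr ⟨Finset.mem_univ _, Finset.mem_univ _, Ne.symm h.2.2⟩
    · intro p hp; rfl
  rw [hoff, add_zero]
  rw [Algebra.algebraMap_eq_smul_one, Finset.sum_smul]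
  refine Finset.sum_congr rfl fun i _ => ?_
  simp [h1, pow_two, smul_smul]

end SumSq
namespace CliffOdd

open Pauli CliffordAlgebra

variable (m : ℕ)

abbrev MB (m : ℕ) := Matrix (K m) (K m) ℂ
abbrev B (m : ℕ) := MB m × MB m

noncomputable def τ (i : Fin (2 * m + 1)) : ℂ := if (i : ℕ) = 2 * m then -1 else 1

noncomputable def Γ (i : Fin (2 * m + 1)) : B m := (g m i, τ m i • g m i)

lemma τ_sq (i : Fin (2 * m + 1)) : τ m i * τ m i = 1 := by
  rw [τ]; split_ifs <;> norm_num

lemma Γ_sq (i : Fin (2 * m + 1)) : Γ m i * Γ m i = 1 := by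
  have hg := g_sq (m := m) i
  rw [Γ, Prod.mk_mul_mk, hg, smul_mul_assoc, mul_smul_comm, smul_smul, hg, τ_sq, one_smul]
  rfl

lemma Γ_anticomm {i j : Fin (2 * m + 1)} (hij : i ≠ j) :
    Γ m i * Γ m j = -(Γ m j * Γ m i) := by
  have hv : (i : ℕ) ≠ (j : ℕ) := fun h => hij (Fin.ext h)
  have hi2 : (i : ℕ) ≤ 2 * m := by have := i.isLt; omega
  have hj2 : (j : ℕ) ≤ 2 * m := by have := j.isLt; omega
  have hg := g_anticomm (m := m) hv hi2 hj2
  rw [Γ, Γ, Prod.mk_mul_mk, Prod.mk_mul_mk, hg, Prod.neg_mk]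
  refine Prod.ext rfl ?_
  show τ m i • g m i * τ m j • g m j = -(τ m j • g m j * τ m i • g m i)
  rw [smul_mul_assoc, mul_smul_comm, smul_mul_assoc, mul_smul_comm, hg, smul_smul, smul_smul,
    smul_neg, mul_comm]

noncomputable def fΓ : (Fin (2 * m + 1) → ℂ) →ₗ[ℂ] B m where
  toFun x := ∑ i, x i • Γ m i
  map_add' x y := by simp [add_smul, Finset.sum_add_distrib]
  map_smul' c x := by simp [smul_smul, Finset.smul_sum]

variable {Q : QuadraticForm ℂ (Fin (2 * m + 1) → ℂ)}

lemma f_cond (hQ : ∀ x, Q x = ∑ i, (x i) ^ 2) (x : Fin (2 * m + 1) → ℂ) :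
    fΓ m x * fΓ m x = algebraMap ℂ (B m) (Q x) := by
  rw [hQ x]
  exact anticomm_sum_sq (Γ m) (Γ_sq m) (fun i j h => Γ_anticomm m h) x

noncomputable def φ (hQ : ∀ x, Q x = ∑ i, (x i) ^ 2) : CliffordAlgebra Q →ₐ[ℂ] B m :=
  CliffordAlgebra.lift Q ⟨fΓ m, f_cond m hQ⟩

lemma φ_ι (hQ : ∀ x, Q x = ∑ i, (x i) ^ 2) (i : Fin (2 * m + 1)) :
    φ m hQ (ι Q (CliffSpan.E i)) = Γ m i := by
  rw [φ, CliffordAlgebra.lift_ι_apply]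
  show ∑ j, CliffSpan.E i j • Γ m j = Γ m i
  rw [Finset.sum_eq_single i]
  · simp [CliffSpan.E]
  · intro j _ hj
    simp [CliffSpan.E, Pi.single_apply, hj]
  · simp

-- index evaluation lemmas
lemma uu_coe (k : Fin m) : uu m (k : ℕ) = dl k := by
  rw [uu, dif_pos k.isLt]

lemma vv_coe (k : Fin m) : vv m (k : ℕ) = cc k := by
  rw [vv, dif_pos k.isLt]

lemma uu_mid (k : Fin m) : uu m (m + (k : ℕ)) = dl k := by
  have h1 : ¬ m + (k : ℕ) < m := by omega
  have h2 : m + (k : ℕ) < 2 * m := by have := k.isLt; omega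
  rw [uu, dif_neg h1, dif_pos h2]
  congr 1
  ext
  simp

lemma vv_mid (k : Fin m) : vv m (m + (k : ℕ)) = cc k + dl k := by
  have h1 : ¬ m + (k : ℕ) < m := by omega
  have h2 : m + (k : ℕ) < 2 * m := by have := k.isLt; omega
  rw [vv, dif_neg h1, dif_pos h2]
  have : (⟨m + (k : ℕ) - m, by omega⟩ : Fin m) = k := by ext; simp
  rw [this]

lemma uu_last : uu m (2 * m) = 0 := by
  rw [uu, dif_neg (by omega), dif_neg (by omega)]

lemma vv_last : vv m (2 * m) = one' := by
  rw [vv, dif_neg (by omega), dif_neg (by omega)]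

lemma σc_last : σc m (2 * m) = 1 := by
  rw [σc, if_neg (by omega), if_neg (by omega)]

lemma cc_self (k : Fin m) : cc k k = 0 := by
  rw [cc, if_neg (lt_irrefl _)]

/-- the subalgebra generated by the gammas is everything -/
lemma adjoin_top {S : Subalgebra ℂ (B m)} (hΓ : ∀ i : Fin (2 * m + 1), Γ m i ∈ S) :
    ∀ y : B m, y ∈ S := by
  -- diagonal copies of raw D matrices for i < 2m
  have hdd : ∀ i : ℕ, i < 2 * m →
      ((D (uu m i) (vv m i), D (uu m i) (vv m i)) : B m) ∈ S := by
    intro i hi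
    have hσ : σc m i ≠ 0 := by
      rw [σc]; split_ifs <;> simp [Complex.I_ne_zero]
    have hτ : τ m (⟨i, by omega⟩ : Fin (2 * m + 1)) = 1 := by
      rw [τ, if_neg (by simp; omega)]
    have hΓeq : Γ m ⟨i, by omega⟩ =
        σc m i • ((D (uu m i) (vv m i), D (uu m i) (vv m i)) : B m) := by
      rw [Γ, hτ, one_smul, g, Prod.smul_mk]
    have h1 := S.smul_mem (hΓ ⟨i, by omega⟩) (σc m i)⁻¹
    rw [hΓeq, smul_smul, inv_mul_cancel₀ hσ, one_smul] at h1
    exact h1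
  -- (D 0 (dl k), D 0 (dl k))
  have hDz : ∀ k : Fin m, ((D 0 (dl k), D 0 (dl k)) : B m) ∈ S := by
    intro k
    have h1 := S.mul_mem (hdd (k : ℕ) (by have := k.isLt; omega))
      (hdd (m + (k : ℕ)) (by have := k.isLt; omega))
    rw [uu_coe, vv_coe, uu_mid, vv_mid, Prod.mk_mul_mk] at h1
    have hprod : D (dl k) (cc k) * D (dl k) (cc k + dl k) = D 0 (dl k) := by
      rw [D_mul, dl, dot_single, cc_self, ε_zero, one_smul, self_add_self, ← add_assoc,
        self_add_self, zero_add]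
    rwa [hprod] at h1
  -- (D 0 v, D 0 v) for arbitrary v
  have hD0sum : ∀ s : Finset (Fin m),
      ((D 0 (∑ k ∈ s, dl k), D 0 (∑ k ∈ s, dl k)) : B m) ∈ S := by
    intro s
    induction s using Finset.cons_induction with
    | empty =>
      simp only [Finset.sum_empty]
      rw [show ((D 0 0, D 0 0) : B m) = 1 by rw [D_zero_zero]; rfl]
      exact S.one_mem
    | cons a s ha ih =>
      have h1 := S.mul_mem (hDz a) ih
      rw [Prod.mk_mul_mk, D_mul, dot_zero_right, ε_zero, one_smul, add_zero,
        ← Finset.sum_cons] at h1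
      exact h1
  have hveq : ∀ v : K m, v = ∑ k ∈ Finset.univ.filter (fun k => v k = 1), dl k := by
    intro v
    funext j
    rw [Finset.sum_apply]
    simp only [dl, Pi.single_apply]
    rw [Finset.sum_ite_eq (Finset.univ.filter (fun k => v k = 1)) j (fun _ => 1)]
    simp only [Finset.mem_filter, Finset.mem_univ, true_and]
    rcases zmod2_cases (v j) with h | h <;> rw [h] <;> simp
  have hDzv : ∀ v : K m, ((D 0 v, D 0 v) : B m) ∈ S := by
    intro v
    have := hD0sum (Finset.univ.filter (fun k => v k = 1))
    rwa [← hveq v] at this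
  -- (D (dl k) 0, _)
  have hDx : ∀ k : Fin m, ((D (dl k) 0, D (dl k) 0) : B m) ∈ S := by
    intro k
    have h1 := S.mul_mem (hdd (k : ℕ) (by have := k.isLt; omega)) (hDzv (cc k))
    rw [uu_coe, vv_coe, Prod.mk_mul_mk, D_mul, dot_zero_right, ε_zero, one_smul, add_zero,
      self_add_self] at h1
    exact h1
  have hDusum : ∀ s : Finset (Fin m),
      ((D (∑ k ∈ s, dl k) 0, D (∑ k ∈ s, dl k) 0) : B m) ∈ S := by
    intro s
    induction s using Finset.cons_induction with
    | empty =>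
      simp only [Finset.sum_empty]
      rw [show ((D 0 0, D 0 0) : B m) = 1 by rw [D_zero_zero]; rfl]
      exact S.one_mem
    | cons a s ha ih =>
      have h1 := S.mul_mem (hDx a) ih
      rw [Prod.mk_mul_mk, D_mul, dot_zero_left, ε_zero, one_smul, add_zero,
        ← Finset.sum_cons] at h1
      exact h1
  have hDu : ∀ u : K m, ((D u 0, D u 0) : B m) ∈ S := by
    intro u
    have := hDusum (Finset.univ.filter (fun k => u k = 1))
    rwa [← hveq u] at this
  have hDuv : ∀ u v : K m, ((D u v, D u v) : B m) ∈ S := by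
    intro u v
    have h1 := S.mul_mem (hDu u) (hDzv v)
    rw [Prod.mk_mul_mk, D_mul, dot_zero_left, ε_zero, one_smul, add_zero, zero_add] at h1
    exact h1
  -- all diagonal pairs
  have hMM : ∀ M : MB m, ((M, M) : B m) ∈ S := by
    intro M
    have hsp := D_span M
    induction hsp using Submodule.span_induction with
    | mem A hA => obtain ⟨u, v, rfl⟩ := hA; exact hDuv u v
    | zero => exact S.zero_mem
    | add A C _ _ ihA ihC =>
      have := S.add_mem ihA ihC
      rwa [show ((A, A) : B m) + (C, C) = (A + C, A + C) from rfl] at this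
    | smul c A _ ihA =>
      have := S.smul_mem ihA c
      rwa [show c • ((A, A) : B m) = (c • A, c • A) from rfl] at this
  -- the idempotents
  have hζsq : D (0 : K m) one' * D 0 one' = 1 := by
    rw [D_sq, dot_zero_right, ε_zero, one_smul]
  have hlast : Γ m ⟨2 * m, by omega⟩ = ((D 0 one', -(D 0 one')) : B m) := by
    rw [Γ, τ, if_pos rfl, g, σc_last, uu_last, vv_last, one_smul, neg_one_smul]
  have h11 : (((1 : MB m), (-1 : MB m)) : B m) ∈ S := by
    have h1 := S.mul_mem (hMM (D 0 one')) (hΓ ⟨2 * m, by omega⟩)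
    rw [hlast, Prod.mk_mul_mk, hζsq, mul_neg, hζsq] at h1
    exact h1
  have he1 : (((1 : MB m), (0 : MB m)) : B m) ∈ S := by
    have h1 := S.smul_mem (S.add_mem h11 S.one_mem) ((2 : ℂ)⁻¹)
    have heq : ((2 : ℂ)⁻¹) • ((((1 : MB m), (-1 : MB m)) : B m) + 1) = ((1 : MB m), (0 : MB m)) := by
      have : ((((1 : MB m), (-1 : MB m)) : B m) + 1) = ((1 : MB m) + 1, 0) := by
        refine Prod.ext rfl ?_
        show (-1 : MB m) + 1 = 0
        exact neg_add_cancel 1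
      rw [this, Prod.smul_mk, smul_zero]
      congr 1
      rw [← two_smul ℂ (1 : MB m), smul_smul, inv_mul_cancel₀ (two_ne_zero), one_smul]
    rwa [heq] at h1
  have he2 : (((0 : MB m), (1 : MB m)) : B m) ∈ S := by
    have h1 := S.sub_mem S.one_mem he1
    rwa [show ((1 : B m) - ((1 : MB m), (0 : MB m))) = ((0 : MB m), (1 : MB m)) by
      refine Prod.ext ?_ ?_ <;> simp [Prod.fst_sub, Prod.snd_sub]] at h1
  intro y
  have hy : y = ((y.1, y.1) : B m) * ((1 : MB m), (0 : MB m)) +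
      ((y.2, y.2) : B m) * ((0 : MB m), (1 : MB m)) := by
    refine Prod.ext ?_ ?_ <;> simp
  rw [hy]
  exact S.add_mem (S.mul_mem (hMM y.1) he1) (S.mul_mem (hMM y.2) he2)

end CliffOdd

theorem clifford_odd_iso_matrix_prod (m : ℕ)
    (Q : QuadraticForm ℂ (Fin (2 * m + 1) → ℂ))
    (hQ : ∀ x, Q x = ∑ i, (x i) ^ 2) :
    Nonempty (CliffordAlgebra Q ≃ₐ[ℂ]
      (Matrix (Fin (2 ^ m)) (Fin (2 ^ m)) ℂ × Matrix (Fin (2 ^ m)) (Fin (2 ^ m)) ℂ)) := by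
  classical
  set φ := CliffOdd.φ m hQ with hφdef
  -- surjectivity
  have hsurj : Function.Surjective φ := by
    intro y
    exact (AlgHom.mem_range φ).mp (CliffOdd.adjoin_top m
      (fun i => (AlgHom.mem_range φ).mpr
        ⟨CliffordAlgebra.ι Q (CliffSpan.E i), CliffOdd.φ_ι m hQ i⟩) y)
  -- dimension count
  have hK : Fintype.card (Pauli.K m) = 2 ^ m := by
    rw [Fintype.card_fun, ZMod.card, Fintype.card_fin]
  have hB : Module.finrank ℂ (CliffOdd.B m) = 2 ^ (2 * m + 1) := by
    rw [Module.finrank_prod, Module.finrank_matrix, hK, Module.finrank_self, mul_one]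
    rw [pow_succ, two_mul, pow_add]
    ring
  have hCl : Module.finrank ℂ (CliffordAlgebra Q) ≤ 2 ^ (2 * m + 1) :=
    CliffSpan.finrank_le Q
  have hrange : LinearMap.range φ.toLinearMap = ⊤ :=
    LinearMap.range_eq_top.mpr hsurj
  have hadd := LinearMap.finrank_range_add_finrank_ker φ.toLinearMap
  rw [hrange, finrank_top, hB] at hadd
  have hker0 : Module.finrank ℂ (LinearMap.ker φ.toLinearMap) = 0 := by omega
  have hker : LinearMap.ker φ.toLinearMap = ⊥ := Submodule.finrank_eq_zero.mp hker0
  have hinj : Function.Injective φ := by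
    have := LinearMap.ker_eq_bot.mp hker
    exact this
  -- assemble
  let e1 : CliffordAlgebra Q ≃ₐ[ℂ] CliffOdd.B m := AlgEquiv.ofBijective φ ⟨hinj, hsurj⟩
  let eK : Pauli.K m ≃ Fin (2 ^ m) := Fintype.equivFinOfCardEq hK
  let Ψ1 : CliffOdd.MB m ≃ₐ[ℂ] Matrix (Fin (2 ^ m)) (Fin (2 ^ m)) ℂ :=
    Matrix.reindexAlgEquiv ℂ ℂ eK
  let Ψ : CliffOdd.B m ≃ₐ[ℂ]
      (Matrix (Fin (2 ^ m)) (Fin (2 ^ m)) ℂ × Matrix (Fin (2 ^ m)) (Fin (2 ^ m)) ℂ) :=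
    AlgEquiv.ofRingEquiv (f := RingEquiv.prodCongr Ψ1.toRingEquiv Ψ1.toRingEquiv)
      (fun r => by
        show (Ψ1 (algebraMap ℂ (CliffOdd.MB m) r), Ψ1 (algebraMap ℂ (CliffOdd.MB m) r)) = _
        rw [AlgEquiv.commutes]
        rfl)
  exact ⟨e1.trans Ψ⟩
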